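/- Let n ≥ 2, let k > 2 be a natural number, and let λ₁, …, λₙ be nonzero complex numbers. Suppose z ∈ ℂⁿ satisfies z₁ ≠ 0 and λ₁ z₁^{k−1}·conj(z_j) = λ_j z_j^{k−1}·conj(z₁) for all j = 2, …, n. Then for every j = 2, …, n one has |λ₁|²·|z₁|^{2(k−1)} ≠ (k−1)²·|λ_j|²·|z_j|^{2(k−2)}·|z₁|². -/

import Mathlib

/-- Lemma 5.3 (second part): at every point of the polar variety of the Fermat foliation
(`λ₁ z₁^{k−1}·conj(z_j) = λ_j z_j^{k−1}·conj(z₁)` for all `j ≠ 1`) with `z₁ ≠ 0` and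
`k > 2`, one has `|d(z)|² ≠ |c_j(z)|²`, i.e.
`|λ₁|²·|z₁|^{2(k−1)} ≠ (k−1)²·|λ_j|²·|z_j|^{2(k−2)}·|z₁|²` for every `j ≠ 1`. -/
theorem stmt9 (n k : ℕ) (hk : 2 < k) (lam : Fin (n + 2) → ℂ) (hlam : ∀ i, lam i ≠ 0)
    (z : Fin (n + 2) → ℂ) (hz : z 0 ≠ 0)
    (heq : ∀ j : Fin (n + 2), j ≠ 0 →
      lam 0 * z 0 ^ (k - 1) * (starRingEnd ℂ) (z j)
        = lam j * z j ^ (k - 1) * (starRingEnd ℂ) (z 0)) :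
    ∀ j : Fin (n + 2), j ≠ 0 →
      ‖lam 0‖ ^ 2 * ‖z 0‖ ^ (2 * (k - 1)) ≠
        ((k - 1 : ℕ) : ℝ) ^ 2 * ‖lam j‖ ^ 2 *
          ‖z j‖ ^ (2 * (k - 2)) * ‖z 0‖ ^ 2 := by
  intro j hj
  have h := congrArg (‖·‖) (heq j hj)
  simp only [norm_mul, norm_pow, Complex.norm_conj] at h
  set a := ‖lam 0‖ with ha'
  set b := ‖z 0‖ with hb'
  set c := ‖lam j‖ with hc'
  set d := ‖z j‖ with hd'
  have ha : 0 < a := norm_pos_iff.mpr (hlam 0)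
  have hb : 0 < b := norm_pos_iff.mpr hz
  have hc : 0 < c := norm_pos_iff.mpr (hlam j)
  have hd0 : 0 ≤ d := norm_nonneg _
  rcases eq_or_lt_of_le hd0 with hd | hd
  · have : d ^ (2 * (k - 2)) = 0 := by
      rw [← hd]
      exact zero_pow (by omega)
    rw [this]
    have : 0 < a ^ 2 * b ^ (2 * (k - 1)) := by positivity
    intro hcon
    rw [hcon] at this
    simp at this
  · -- d > 0 case
    have hk1 : k - 1 = (k - 2) + 1 := by omega
    rw [hk1] at h
    have key : a * b ^ ((k - 2) + 1) = c * d ^ (k - 2) * b := by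
      have h2 : a * b ^ ((k - 2) + 1) * d = (c * d ^ (k - 2) * b) * d := by
        rw [pow_succ] at h ⊢
        linear_combination h
      exact mul_right_cancel₀ (ne_of_gt hd) h2
    have hkk : (2 : ℝ) ≤ ((k - 1 : ℕ) : ℝ) := by
      have : 2 ≤ k - 1 := by omega
      exact_mod_cast this
    intro hcon
    have e1 : a ^ 2 * b ^ (2 * (k - 1)) = (c * d ^ (k - 2) * b) ^ 2 := by
      rw [hk1, pow_mul]
      rw [← key]
      ring
    have e2 : (c * d ^ (k - 2) * b) ^ 2 = c ^ 2 * d ^ (2 * (k - 2)) * b ^ 2 := by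
      rw [pow_mul]
      ring
    rw [e1, e2] at hcon
    have hx : 0 < c ^ 2 * d ^ (2 * (k - 2)) * b ^ 2 := by positivity
    have h4 : ((k - 1 : ℕ) : ℝ) ^ 2 * (c ^ 2 * d ^ (2 * (k - 2)) * b ^ 2)
        = c ^ 2 * d ^ (2 * (k - 2)) * b ^ 2 := by linear_combination -hcon
    have h5 : (4 : ℝ) * (c ^ 2 * d ^ (2 * (k - 2)) * b ^ 2)
        ≤ ((k - 1 : ℕ) : ℝ) ^ 2 * (c ^ 2 * d ^ (2 * (k - 2)) * b ^ 2) :=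
      mul_le_mul_of_nonneg_right (by nlinarith) hx.le
    linarith
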